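/- Let L be a Lie algebroid over R with L free of finite rank over R. The comultiplication Δ on U_R(L), determined by Δ(r) = r⊗_R 1 for r ∈ R, Δ(l) = l⊗_R 1 + 1⊗_R l for l ∈ L, and multiplicativity Δ(DE) = D_{(1)}E_{(1)} ⊗ D_{(2)}E_{(2)}, is coassociative and counital with counit ε(D) = D(1) (the action of D on 1 ∈ R). -/

import Mathlib

open TensorProduct

/-- Defining relations of `U_R(L)` (see STATEMENT 3). -/
inductive URel (k R L : Type*) [CommRing k] [CommRing R] [Algebra k R]
    [LieRing L] [LieAlgebra k L] [Module R L] (ρ : L → Derivation k R R) :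
    FreeAlgebra k (R × L) → FreeAlgebra k (R × L) → Prop
  | add (x y : R × L) :
      URel k R L ρ (FreeAlgebra.ι k (x + y)) (FreeAlgebra.ι k x + FreeAlgebra.ι k y)
  | smul (c : k) (x : R × L) :
      URel k R L ρ (FreeAlgebra.ι k (c • x)) (c • FreeAlgebra.ι k x)
  | lie (x y : R × L) :
      URel k R L ρ (FreeAlgebra.ι k x * FreeAlgebra.ι k y - FreeAlgebra.ι k y * FreeAlgebra.ι k x)
        (FreeAlgebra.ι k ((ρ x.2 y.1 - ρ y.2 x.1, ⁅x.2, y.2⁆) : R × L))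
  | central (r : R) (x : R × L) :
      URel k R L ρ (FreeAlgebra.ι k ((r, 0) : R × L) * FreeAlgebra.ι k x)
        (FreeAlgebra.ι k ((r * x.1, r • x.2) : R × L))
  | one : URel k R L ρ (FreeAlgebra.ι k ((1, 0) : R × L)) 1

variable (k R L : Type*) [Field k] [CharZero k] [CommRing R] [Algebra k R]
  [LieRing L] [LieAlgebra k L] [Module R L] (ρ : L → Derivation k R R)

/-- The universal enveloping algebra `U_R(L)` of the Lie algebroid `L`. -/
abbrev UEnv := RingQuot (URel k R L ρ)

/-- The class of a generator `(r, l) ∈ R ⊕ L` in `U_R(L)`. -/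
noncomputable def uGen (x : R × L) : UEnv k R L ρ :=
  RingQuot.mkAlgHom k (URel k R L ρ) (FreeAlgebra.ι k x)

/- ----------------- auxiliary lemmas ----------------- -/

lemma uGen_pair_add (x y : R × L) :
    uGen k R L ρ (x + y) = uGen k R L ρ x + uGen k R L ρ y := by
  have h := RingQuot.mkAlgHom_rel k (URel.add (k := k) (ρ := ρ) x y)
  simpa [uGen, map_add] using h

lemma uGen_one : uGen k R L ρ ((1, 0) : R × L) = 1 := by
  have h := RingQuot.mkAlgHom_rel k (URel.one (k := k) (ρ := ρ))
  simpa [uGen, map_one] using h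

lemma uGen_comm (l : L) (r : R) :
    uGen k R L ρ (0, l) * uGen k R L ρ (r, 0) =
      uGen k R L ρ (r, 0) * uGen k R L ρ (0, l) + uGen k R L ρ (ρ l r, 0) := by
  have h := RingQuot.mkAlgHom_rel k (URel.lie (k := k) (ρ := ρ) ((0 : R), l) (r, (0 : L)))
  simp only [map_sub, map_mul] at h
  have h2 : ((ρ ((0 : R), l).2) ((r, (0 : L)).1) - (ρ ((r, (0 : L)).2)) (((0 : R), l).1),
      (⁅((0 : R), l).2, ((r, (0 : L)).2)⁆ : L)) = ((ρ l r, 0) : R × L) := by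
    simp
  rw [h2] at h
  have h3 : (RingQuot.mkAlgHom k (URel k R L ρ)) (FreeAlgebra.ι k ((0 : R), l)) *
      (RingQuot.mkAlgHom k (URel k R L ρ)) (FreeAlgebra.ι k (r, (0 : L))) -
      (RingQuot.mkAlgHom k (URel k R L ρ)) (FreeAlgebra.ι k (r, (0 : L))) *
      (RingQuot.mkAlgHom k (URel k R L ρ)) (FreeAlgebra.ι k ((0 : R), l)) =
      uGen k R L ρ (ρ l r, 0) := h
  rw [sub_eq_iff_eq_add'] at h3
  exact h3

lemma uGen_algebraMap (c : k) :
    uGen k R L ρ (algebraMap k R c, 0) = algebraMap k (UEnv k R L ρ) c := by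
  have h := RingQuot.mkAlgHom_rel k (URel.smul (k := k) (ρ := ρ) c ((1 : R), (0 : L)))
  have h2 : (c • ((1 : R), (0 : L)) : R × L) = ((algebraMap k R c, 0) : R × L) := by
    simp [Prod.smul_mk, Algebra.smul_def]
  rw [h2] at h
  have h3 : uGen k R L ρ (algebraMap k R c, 0) = c • uGen k R L ρ (1, 0) := by
    simpa [uGen, map_smul] using h
  rw [h3, uGen_one, Algebra.algebraMap_eq_smul_one]

/-- Generation principle for `U_R(L)`: a predicate stable under addition,
`R`-scalars and left multiplication by generators from `L`, and holding at `1`,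
holds everywhere. -/
lemma UEnv.generation [Module R (UEnv k R L ρ)]
    (hsmul : ∀ (r : R) (u : UEnv k R L ρ), r • u = uGen k R L ρ (r, 0) * u)
    {P : UEnv k R L ρ → Prop}
    (h1 : P 1) (hadd : ∀ u v, P u → P v → P (u + v))
    (hr : ∀ (r : R) (u), P u → P (r • u))
    (hl : ∀ (l : L) (u), P u → P (uGen k R L ρ (0, l) * u)) :
    ∀ u, P u := by
  have key : ∀ a : FreeAlgebra k (R × L), ∀ u, P u →
      P (RingQuot.mkAlgHom k (URel k R L ρ) a * u) := by
    intro a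
    induction a using FreeAlgebra.induction with
    | grade0 c =>
      intro u hu
      have : (RingQuot.mkAlgHom k (URel k R L ρ)) (algebraMap k (FreeAlgebra k (R × L)) c) * u =
          (algebraMap k R c) • u := by
        rw [AlgHom.commutes, hsmul, uGen_algebraMap]
      rw [this]
      exact hr _ u hu
    | grade1 x =>
      intro u hu
      have hx : (RingQuot.mkAlgHom k (URel k R L ρ)) (FreeAlgebra.ι k x) =
          uGen k R L ρ (x.1, 0) + uGen k R L ρ (0, x.2) := by
        rw [show (RingQuot.mkAlgHom k (URel k R L ρ)) (FreeAlgebra.ι k x) = uGen k R L ρ x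
          from rfl, ← uGen_pair_add]
        congr 1
        simp [Prod.ext_iff]
      rw [hx, add_mul]
      exact hadd _ _ (by rw [← hsmul]; exact hr _ u hu) (hl _ u hu)
    | mul a b ha hb =>
      intro u hu
      rw [map_mul, mul_assoc]
      exact ha _ (hb u hu)
    | add a b ha hb =>
      intro u hu
      rw [map_add, add_mul]
      exact hadd _ _ (ha u hu) (hb u hu)
  intro u
  obtain ⟨a, rfl⟩ := RingQuot.mkAlgHom_surjective k (URel k R L ρ) u
  simpa using key a 1 h1

set_option maxHeartbeats 1000000 in
/-- For a Lie algebroid `L` over `R` (`L` locally free of finite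
rank), the comultiplication `Δ` on `U_R(L)` — determined by `Δ(r) = r ⊗ 1`,
`Δ(l) = l ⊗ 1 + 1 ⊗ l` and multiplicativity (expressed here by the coderivation
property `Δ(l·u) = δ_l(Δu)` along the generators `l ∈ L` together with
`R`-linearity) — is coassociative and counital, with counit `ε(D) = D(1)`
(the action of `D` on `1 ∈ R` through the anchor representation `act`). -/
theorem statement9
    [Module R (UEnv k R L ρ)]
    (hsmul : ∀ (r : R) (u : UEnv k R L ρ), r • u = uGen k R L ρ (r, 0) * u)
    (Δ : UEnv k R L ρ →ₗ[R] TensorProduct R (UEnv k R L ρ) (UEnv k R L ρ))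
    (hΔR : ∀ r : R, Δ (uGen k R L ρ (r, 0)) = uGen k R L ρ (r, 0) ⊗ₜ[R] 1)
    (hΔL : ∀ l : L, Δ (uGen k R L ρ (0, l)) =
      uGen k R L ρ (0, l) ⊗ₜ[R] 1 + 1 ⊗ₜ[R] uGen k R L ρ (0, l))
    (δ : L → TensorProduct R (UEnv k R L ρ) (UEnv k R L ρ) →
      TensorProduct R (UEnv k R L ρ) (UEnv k R L ρ))
    (hδ_add : ∀ l x y, δ l (x + y) = δ l x + δ l y)
    (hδ_tmul : ∀ (l : L) (u v : UEnv k R L ρ),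
      δ l (u ⊗ₜ[R] v) =
        (uGen k R L ρ (0, l) * u) ⊗ₜ[R] v + u ⊗ₜ[R] (uGen k R L ρ (0, l) * v))
    (hΔmul : ∀ (l : L) (u : UEnv k R L ρ),
      Δ (uGen k R L ρ (0, l) * u) = δ l (Δ u))
    (act : UEnv k R L ρ →ₐ[k] Module.End k R)
    (hact : ∀ x : R × L,
      act (uGen k R L ρ x) = LinearMap.mulLeft k x.1 + (ρ x.2).toLinearMap)
    (ε : UEnv k R L ρ →ₗ[R] R)
    (hε : ∀ u, ε u = act u 1) :
    (∀ u, (TensorProduct.assoc R (UEnv k R L ρ) (UEnv k R L ρ) (UEnv k R L ρ))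
        ((TensorProduct.map Δ LinearMap.id) (Δ u)) =
      (TensorProduct.map LinearMap.id Δ) (Δ u)) ∧
    (∀ u, (TensorProduct.lid R (UEnv k R L ρ))
        ((TensorProduct.map ε LinearMap.id) (Δ u)) = u) ∧
    (∀ u, (TensorProduct.rid R (UEnv k R L ρ))
        ((TensorProduct.map LinearMap.id ε) (Δ u)) = u) := by
  -- Notation
  set U := UEnv k R L ρ with hU
  -- key commutation relation: l · (r • u) = r • (l · u) + (ρ l r) • u
  have rel1 : ∀ (l : L) (r : R) (u : U),
      uGen k R L ρ (0, l) * (r • u) =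
        r • (uGen k R L ρ (0, l) * u) + (ρ l r) • u := by
    intro l r u
    rw [hsmul r u, ← mul_assoc, uGen_comm, add_mul, mul_assoc, ← hsmul, ← hsmul]
  have δ0 : ∀ l : L, δ l 0 = 0 := by
    intro l
    have h := hδ_add l 0 0
    rw [add_zero] at h
    exact (eq_sub_of_add_eq h.symm).trans (sub_self _)
  -- δ is a "σ-derivation" with respect to the R-action
  have δsmul : ∀ (l : L) (r : R) (t : TensorProduct R U U),
      δ l (r • t) = r • δ l t + (ρ l r) • t := by
    intro l r t
    induction t using TensorProduct.induction_on with
    | zero => simp [δ0]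
    | tmul u v =>
      rw [smul_tmul', hδ_tmul, hδ_tmul, rel1]
      simp only [add_tmul, smul_tmul', smul_add]
      abel
    | add x y hx hy =>
      rw [smul_add, hδ_add, hδ_add, hx, hy, smul_add, smul_add]
      abel
  -- the triple coderivation G l on U ⊗ (U ⊗ U)
  have Gdef : ∀ l : L, ∃ G : TensorProduct R U (TensorProduct R U U) →+
      TensorProduct R U (TensorProduct R U U),
      ∀ (u : U) (t : TensorProduct R U U),
        G (u ⊗ₜ[R] t) = (uGen k R L ρ (0, l) * u) ⊗ₜ[R] t + u ⊗ₜ[R] δ l t := by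
    intro l
    refine ⟨TensorProduct.liftAddHom
      { toFun := fun u =>
          { toFun := fun t => (uGen k R L ρ (0, l) * u) ⊗ₜ[R] t + u ⊗ₜ[R] δ l t
            map_zero' := by simp [δ0]
            map_add' := by
              intro x y
              rw [hδ_add]
              simp only [tmul_add]
              abel }
        map_zero' := by
          ext t
          simp
        map_add' := by
          intro u v
          ext t
          simp only [AddMonoidHom.coe_mk, ZeroHom.coe_mk, AddMonoidHom.add_apply]
          rw [mul_add]
          simp only [add_tmul]
          abel } ?_, fun u t => rfl⟩
    intro r u t
    dsimp only [AddMonoidHom.coe_mk, ZeroHom.coe_mk]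
    rw [rel1, δsmul]
    simp only [add_tmul, tmul_add, smul_tmul, smul_tmul']
    abel
  choose G hG using Gdef
  -- intertwining of δ with (id ⊗ Δ) through G
  have ha : ∀ (l : L) (t : TensorProduct R U U),
      TensorProduct.map LinearMap.id Δ (δ l t) =
        G l (TensorProduct.map LinearMap.id Δ t) := by
    intro l t
    induction t using TensorProduct.induction_on with
    | zero => simp [δ0]
    | tmul u v =>
      rw [hδ_tmul, map_add]
      simp only [TensorProduct.map_tmul, LinearMap.id_coe, id_eq]
      rw [hΔmul, hG]
    | add x y hx hy =>
      rw [hδ_add, map_add, hx, hy, map_add, map_add]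
  -- helper for the (Δ ⊗ id) side
  have hb' : ∀ (l : L) (s : TensorProduct R U U) (v : U),
      (TensorProduct.assoc R U U U) ((δ l s) ⊗ₜ[R] v) +
        (TensorProduct.assoc R U U U) (s ⊗ₜ[R] (uGen k R L ρ (0, l) * v)) =
      G l ((TensorProduct.assoc R U U U) (s ⊗ₜ[R] v)) := by
    intro l s v
    induction s using TensorProduct.induction_on with
    | zero => simp [δ0]
    | tmul a b =>
      rw [hδ_tmul]
      simp only [add_tmul, map_add, TensorProduct.assoc_tmul]
      rw [hG, hδ_tmul]
      simp only [tmul_add]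
      abel
    | add x y hx hy =>
      rw [hδ_add]
      simp only [add_tmul, map_add]
      rw [← hx, ← hy]
      abel
  have hb : ∀ (l : L) (t : TensorProduct R U U),
      (TensorProduct.assoc R U U U) (TensorProduct.map Δ LinearMap.id (δ l t)) =
        G l ((TensorProduct.assoc R U U U) (TensorProduct.map Δ LinearMap.id t)) := by
    intro l t
    induction t using TensorProduct.induction_on with
    | zero => simp [δ0]
    | tmul u v =>
      rw [hδ_tmul, map_add]
      simp only [TensorProduct.map_tmul, LinearMap.id_coe, id_eq, map_add]
      rw [hΔmul]
      exact hb' l (Δ u) v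
    | add x y hx hy =>
      rw [hδ_add]
      simp only [map_add] at hx hy ⊢
      rw [hx, hy]
  -- counit computations
  have hΔ1 : Δ (1 : U) = (1 : U) ⊗ₜ[R] (1 : U) := by
    rw [show (1 : U) = uGen k R L ρ ((1 : R), (0 : L)) from (uGen_one k R L ρ).symm, hΔR,
      uGen_one]
  have hε1 : ε (1 : U) = 1 := by
    rw [hε, map_one act]
    rfl
  have hεl : ∀ (l : L) (a : U), ε (uGen k R L ρ (0, l) * a) = ρ l (ε a) := by
    intro l a
    rw [hε, hε, map_mul, Module.End.mul_apply, hact ((0 : R), l)]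
    simp only [LinearMap.add_apply, LinearMap.mulLeft_apply, zero_mul, zero_add,
      Derivation.coeFn_coe]
  have hL : ∀ (l : L) (t : TensorProduct R U U),
      (TensorProduct.lid R U) (TensorProduct.map ε LinearMap.id (δ l t)) =
        uGen k R L ρ (0, l) * (TensorProduct.lid R U) (TensorProduct.map ε LinearMap.id t) := by
    intro l t
    induction t using TensorProduct.induction_on with
    | zero => simp [δ0]
    | tmul a b =>
      rw [hδ_tmul, map_add, map_add]
      simp only [TensorProduct.map_tmul, LinearMap.id_coe, id_eq, TensorProduct.lid_tmul]
      rw [hεl, rel1]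
      abel
    | add x y hx hy =>
      rw [hδ_add]
      simp only [map_add, hx, hy, mul_add]
  have hR : ∀ (l : L) (t : TensorProduct R U U),
      (TensorProduct.rid R U) (TensorProduct.map LinearMap.id ε (δ l t)) =
        uGen k R L ρ (0, l) * (TensorProduct.rid R U) (TensorProduct.map LinearMap.id ε t) := by
    intro l t
    induction t using TensorProduct.induction_on with
    | zero => simp [δ0]
    | tmul a b =>
      rw [hδ_tmul, map_add, map_add]
      simp only [TensorProduct.map_tmul, LinearMap.id_coe, id_eq, TensorProduct.rid_tmul]
      rw [hεl, rel1]
      try abel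
    | add x y hx hy =>
      rw [hδ_add]
      simp only [map_add, hx, hy, mul_add]
  refine ⟨?_, ?_, ?_⟩
  · -- coassociativity
    refine UEnv.generation k R L ρ hsmul ?_ ?_ ?_ ?_
    · rw [hΔ1]
      simp only [TensorProduct.map_tmul, LinearMap.id_coe, id_eq, hΔ1,
        TensorProduct.assoc_tmul]
    · intro u v hu hv
      rw [map_add, map_add, map_add, hu, hv, map_add]
    · intro r u hu
      rw [map_smul, map_smul, map_smul, hu, map_smul]
    · intro l u hu
      rw [hΔmul, hb, hu, ← ha]
  · -- left counit
    refine UEnv.generation k R L ρ hsmul ?_ ?_ ?_ ?_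
    · rw [hΔ1]
      simp only [TensorProduct.map_tmul, LinearMap.id_coe, id_eq, hε1,
        TensorProduct.lid_tmul, one_smul]
    · intro u v hu hv
      rw [map_add, map_add, map_add, hu, hv]
    · intro r u hu
      rw [map_smul, map_smul, map_smul, hu]
    · intro l u hu
      rw [hΔmul, hL, hu]
  · -- right counit
    refine UEnv.generation k R L ρ hsmul ?_ ?_ ?_ ?_
    · rw [hΔ1]
      simp only [TensorProduct.map_tmul, LinearMap.id_coe, id_eq, hε1,
        TensorProduct.rid_tmul, one_smul]
    · intro u v hu hv
      rw [map_add, map_add, map_add, hu, hv]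
    · intro r u hu
      rw [map_smul, map_smul, map_smul, hu]
    · intro l u hu
      rw [hΔmul, hR, hu]
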